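/- For every s ≥ 7 and every d ≥ 1, the complement of the cycle C_s is not the intersection graph of any family of degenerate (1-dimensional) axis-parallel segments in ℝ^d; i.e., the complement of C_s is not realizable as 1-boxes in ℝ^d. -/
import Mathlib


open Set

/-- An axis-parallel box in `ℝ^d`: a product of nonempty closed intervals. -/
def IsBoxIn (d : ℕ) (s : Set (Fin d → ℝ)) : Prop :=
  ∃ lo hi : Fin d → ℝ, (∀ i, lo i ≤ hi i) ∧
    s = {x | ∀ i, x i ∈ Set.Icc (lo i) (hi i)}

/-- A `p`-box in `ℝ^d`: a product of nonempty closed intervals, exactly `d - p`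
of which are degenerate (single points). -/
def IsPBoxIn (p d : ℕ) (s : Set (Fin d → ℝ)) : Prop :=
  ∃ lo hi : Fin d → ℝ, (∀ i, lo i ≤ hi i) ∧
    {i : Fin d | lo i = hi i}.ncard = d - p ∧
    s = {x | ∀ i, x i ∈ Set.Icc (lo i) (hi i)}

/-- A graph is an interval graph if it is the intersection graph of a family of
closed real intervals. -/
def IsIntervalGraph {V : Type*} (G : SimpleGraph V) : Prop :=
  ∃ a b : V → ℝ, (∀ v, a v ≤ b v) ∧
    ∀ u v : V, u ≠ v →
      (G.Adj u v ↔ (Set.Icc (a u) (b u) ∩ Set.Icc (a v) (b v)).Nonempty)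

/-- `G` is the intersection graph of a family of `p`-boxes in `ℝ^d`. -/
def RealizableAsPBoxes {V : Type*} (p d : ℕ) (G : SimpleGraph V) : Prop :=
  ∃ B : V → Set (Fin d → ℝ), (∀ v, IsPBoxIn p d (B v)) ∧
    ∀ u v : V, u ≠ v → (G.Adj u v ↔ (B u ∩ B v).Nonempty)

/-- `G` is the intersection graph of a family of (full) axis-parallel boxes in `ℝ^d`. -/
def RealizableAsBoxes {V : Type*} (d : ℕ) (G : SimpleGraph V) : Prop :=
  ∃ B : V → Set (Fin d → ℝ), (∀ v, IsBoxIn d (B v)) ∧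
    ∀ u v : V, u ≠ v → (G.Adj u v ↔ (B u ∩ B v).Nonempty)

/-- The intersection graph of a family of sets in `ℝ^d`. -/
def intersectionGraph {ι : Type*} {d : ℕ} (B : ι → Set (Fin d → ℝ)) : SimpleGraph ι :=
  SimpleGraph.fromRel fun i j => (B i ∩ B j).Nonempty

/-- The family `B` can be pierced by at most `n` points. -/
def Pierceable {ι : Type*} {d : ℕ} (B : ι → Set (Fin d → ℝ)) (n : ℕ) : Prop :=
  ∃ P : Finset (Fin d → ℝ), P.card ≤ n ∧ ∀ i, ∃ p ∈ P, p ∈ B i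

/-- The subfamily of `B` indexed by `S` can be pierced by at most `n` points. -/
def PierceableOn {ι : Type*} {d : ℕ} (B : ι → Set (Fin d → ℝ)) (S : Finset ι) (n : ℕ) : Prop :=
  ∃ P : Finset (Fin d → ℝ), P.card ≤ n ∧ ∀ i ∈ S, ∃ p ∈ P, p ∈ B i

/-- The cycle graph on `s` vertices, with vertex set `ZMod s`. -/
def cyc (s : ℕ) : SimpleGraph (ZMod s) := SimpleGraph.fromRel fun i j => j = i + 1

/-- The boxicity of a graph, as an extended natural number. -/
noncomputable def boxicity {V : Type*} (G : SimpleGraph V) : ℕ∞ :=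
  sInf {n : ℕ∞ | ∃ k : ℕ, n = k ∧ RealizableAsBoxes k G}

/-- The `p`-boxicity of a graph: the least `d ≥ p` such that `G` is realizable as
`p`-boxes in `ℝ^d` (possibly `∞`). -/
noncomputable def pboxicity {V : Type*} (p : ℕ) (G : SimpleGraph V) : ℕ∞ :=
  sInf {n : ℕ∞ | ∃ k : ℕ, n = k ∧ p ≤ k ∧ RealizableAsPBoxes p k G}

/-- for `s ≥ 7`, `d ≥ 1`, the complement of `C_s` is not realizable as
1-boxes (axis-parallel segments) in `ℝ^d`. -/
theorem compl_cycle_not_realizable_one_boxes (s d : ℕ) (hs : 7 ≤ s) (hd : 1 ≤ d) :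
    ¬ RealizableAsPBoxes 1 d (cyc s)ᶜ := by
  rintro ⟨B, hbox, hadj⟩
  -- extract, for each vertex, the segment data: endpoints and the unique free axis
  have h1 : ∀ v, ∃ (lo hi : Fin d → ℝ) (z : Fin d),
      (∀ k, lo k ≤ hi k) ∧ (∀ k, k ≠ z → lo k = hi k) ∧
      B v = {x | ∀ k, x k ∈ Set.Icc (lo k) (hi k)} := by
    intro v
    obtain ⟨lo, hi, hle, hcard, hset⟩ := hbox v
    have hsum := Set.ncard_add_ncard_compl {i : Fin d | lo i = hi i}
    have hcompl : ({i : Fin d | lo i = hi i}ᶜ).ncard = 1 := by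
      rw [Nat.card_eq_fintype_card, Fintype.card_fin] at hsum
      omega
    obtain ⟨z, hz⟩ := Set.ncard_eq_one.mp hcompl
    refine ⟨lo, hi, z, hle, fun k hk => ?_, hset⟩
    by_contra h
    have hk' : k ∈ ({i : Fin d | lo i = hi i}ᶜ) := h
    rw [hz] at hk'
    exact hk hk'
  choose lo hi z hle hfix hBeq using h1
  have hmem : ∀ v x, x ∈ B v ↔ ∀ k, lo v k ≤ x k ∧ x k ≤ hi v k := by
    intro v x
    rw [hBeq]
    simp only [Set.mem_setOf_eq, Set.mem_Icc]
  have hfixpt : ∀ v x, x ∈ B v → ∀ k, k ≠ z v → x k = lo v k := by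
    intro v x hx k hk
    have h := (hmem v x).1 hx k
    have h2 := hfix v k hk
    have := h.2
    rw [← h2] at this
    exact le_antisymm this h.1
  -- arithmetic in ZMod s
  have hzmod : ∀ t : ℕ, 1 ≤ t → t ≤ 6 → (t : ZMod s) ≠ 0 := by
    intro t h1 h6 h0
    rw [ZMod.natCast_eq_zero_iff] at h0
    have := Nat.le_of_dvd (by omega) h0
    omega
  have hne2 : ∀ a b : ℕ, a < b → b - a ≤ 6 → ((a : ℕ) : ZMod s) ≠ ((b : ℕ) : ZMod s) := by
    intro a b h1 h2 h
    have h0 : ((b - a : ℕ) : ZMod s) = 0 := by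
      rw [Nat.cast_sub h1.le, ← h, sub_self]
    exact hzmod (b - a) (by omega) (by omega) h0
  have hAdjIff : ∀ u v : ZMod s, ((cyc s)ᶜ.Adj u v ↔ (u ≠ v ∧ v ≠ u + 1 ∧ u ≠ v + 1)) := by
    intro u v
    simp only [SimpleGraph.compl_adj, cyc, SimpleGraph.fromRel_adj]
    tauto
  have hadjV : ∀ a b : ℕ, a + 2 ≤ b → b ≤ a + 5 →
      (cyc s)ᶜ.Adj ((a : ℕ) : ZMod s) ((b : ℕ) : ZMod s) := by
    intro a b h2 h5
    rw [hAdjIff]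
    have e1 : ((a : ℕ) : ZMod s) + 1 = ((a + 1 : ℕ) : ZMod s) := by push_cast; ring
    have e2 : ((b : ℕ) : ZMod s) + 1 = ((b + 1 : ℕ) : ZMod s) := by push_cast; ring
    refine ⟨hne2 a b (by omega) (by omega), ?_, ?_⟩
    · rw [e1]; exact (hne2 (a + 1) b (by omega) (by omega)).symm
    · rw [e2]; exact hne2 a (b + 1) (by omega) (by omega)
  have hintV : ∀ a b : ℕ, a + 2 ≤ b → b ≤ a + 5 →
      ∃ x, x ∈ B ((a : ℕ) : ZMod s) ∧ x ∈ B ((b : ℕ) : ZMod s) := by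
    intro a b h1 h2
    have h := hadjV a b h1 h2
    obtain ⟨x, hx⟩ := (hadj _ _ h.ne).1 h
    exact ⟨x, hx.1, hx.2⟩
  have hnonadjV : ∀ a : ℕ, ¬ (cyc s)ᶜ.Adj ((a : ℕ) : ZMod s) ((a + 1 : ℕ) : ZMod s) := by
    intro a h
    rw [hAdjIff] at h
    exact h.2.1 (by push_cast; ring)
  have hdisj : ∀ (a : ℕ) (x : Fin d → ℝ),
      x ∈ B ((a : ℕ) : ZMod s) → x ∈ B ((a + 1 : ℕ) : ZMod s) → False := by
    intro a x h1 h2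
    have hne : ((a : ℕ) : ZMod s) ≠ ((a + 1 : ℕ) : ZMod s) := hne2 a (a + 1) (by omega) (by omega)
    exact hnonadjV a ((hadj _ _ hne).2 ⟨x, h1, h2⟩)
  -- Lemma M: if u,v have different axes and q ∈ B u ∩ B v, then any segment
  -- meeting both contains q.
  have lemM : ∀ u v w : ZMod s, z u ≠ z v →
      ∀ q, q ∈ B u → q ∈ B v → ∀ r, r ∈ B w → r ∈ B u → ∀ t, t ∈ B w → t ∈ B v →
      q ∈ B w := by
    intro u v w huv q hqu hqv r hrw hru t htw htv
    rw [hmem]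
    intro k
    by_cases hk : k = z w
    · by_cases hc : z w = z u
      · have h1 : q k = lo v k := hfixpt v q hqv k (by rw [hk, hc]; exact huv)
        have h2 : t k = lo v k := hfixpt v t htv k (by rw [hk, hc]; exact huv)
        have h3 := (hmem w t).1 htw k
        rw [h1, ← h2]; exact h3
      · have h1 : q k = lo u k := hfixpt u q hqu k (by rw [hk]; exact hc)
        have h2 : r k = lo u k := hfixpt u r hru k (by rw [hk]; exact hc)
        have h3 := (hmem w r).1 hrw k
        rw [h1, ← h2]; exact h3
    · have hq' : q k = lo w k := by
        by_cases hc : k = z u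
        · have h1 : q k = lo v k := hfixpt v q hqv k (by rw [hc]; exact huv)
          have h2 : t k = lo v k := hfixpt v t htv k (by rw [hc]; exact huv)
          have h3 : t k = lo w k := hfixpt w t htw k hk
          rw [h1, ← h2, h3]
        · have h1 : q k = lo u k := hfixpt u q hqu k hc
          have h2 : r k = lo u k := hfixpt u r hru k hc
          have h3 : r k = lo w k := hfixpt w r hrw k hk
          rw [h1, ← h2, h3]
      rw [hq']
      exact ⟨le_refl _, hle w k⟩
  -- Step 1: segments at cyclic distance 2 lie on the same line
  have step1 : ∀ a : ℕ, z ((a : ℕ) : ZMod s) = z ((a + 2 : ℕ) : ZMod s) ∧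
      ∀ k, k ≠ z ((a : ℕ) : ZMod s) → lo ((a : ℕ) : ZMod s) k = lo ((a + 2 : ℕ) : ZMod s) k := by
    intro a
    obtain ⟨q, hq1, hq2⟩ := hintV a (a + 2) (by omega) (by omega)
    by_cases hz : z ((a : ℕ) : ZMod s) = z ((a + 2 : ℕ) : ZMod s)
    · refine ⟨hz, fun k hk => ?_⟩
      rw [← hfixpt _ q hq1 k hk, hfixpt _ q hq2 k (by rw [← hz]; exact hk)]
    · exfalso
      obtain ⟨r4, hr4a, hr4b⟩ := hintV a (a + 4) (by omega) (by omega)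
      obtain ⟨t4, ht4a, ht4b⟩ := hintV (a + 2) (a + 4) (by omega) (by omega)
      obtain ⟨r5, hr5a, hr5b⟩ := hintV a (a + 5) (by omega) (by omega)
      obtain ⟨t5, ht5a, ht5b⟩ := hintV (a + 2) (a + 5) (by omega) (by omega)
      have q4 : q ∈ B ((a + 4 : ℕ) : ZMod s) :=
        lemM _ _ _ hz q hq1 hq2 r4 hr4b hr4a t4 ht4b ht4a
      have q5 : q ∈ B ((a + 5 : ℕ) : ZMod s) :=
        lemM _ _ _ hz q hq1 hq2 r5 hr5b hr5a t5 ht5b ht5a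
      have e : a + 4 + 1 = a + 5 := by omega
      rw [← e] at q5
      exact hdisj (a + 4) q q4 q5
  have SL02 : z ((0 : ℕ) : ZMod s) = z ((2 : ℕ) : ZMod s) ∧
      ∀ k, k ≠ z ((0 : ℕ) : ZMod s) → lo ((0 : ℕ) : ZMod s) k = lo ((2 : ℕ) : ZMod s) k :=
    step1 0
  have SL13 : z ((1 : ℕ) : ZMod s) = z ((3 : ℕ) : ZMod s) ∧
      ∀ k, k ≠ z ((1 : ℕ) : ZMod s) → lo ((1 : ℕ) : ZMod s) k = lo ((3 : ℕ) : ZMod s) k :=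
    step1 1
  have SL24 : z ((2 : ℕ) : ZMod s) = z ((4 : ℕ) : ZMod s) ∧
      ∀ k, k ≠ z ((2 : ℕ) : ZMod s) → lo ((2 : ℕ) : ZMod s) k = lo ((4 : ℕ) : ZMod s) k :=
    step1 2
  have hz04 : z ((0 : ℕ) : ZMod s) = z ((4 : ℕ) : ZMod s) := SL02.1.trans SL24.1
  have hlo04 : ∀ k, k ≠ z ((0 : ℕ) : ZMod s) →
      lo ((0 : ℕ) : ZMod s) k = lo ((4 : ℕ) : ZMod s) k := by
    intro k hk
    rw [SL02.2 k hk, SL24.2 k (by rw [← SL02.1]; exact hk)]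
  obtain ⟨p, hp0, hp3⟩ := hintV 0 3 (by omega) (by omega)
  by_cases hSL : z ((0 : ℕ) : ZMod s) = z ((1 : ℕ) : ZMod s) ∧
      ∀ k, k ≠ z ((0 : ℕ) : ZMod s) → lo ((0 : ℕ) : ZMod s) k = lo ((1 : ℕ) : ZMod s) k
  · -- all of 0,1,3,4 on the same line: 1-D interval contradiction
    obtain ⟨hz01, hlo01⟩ := hSL
    set z0 := z ((0 : ℕ) : ZMod s) with hz0
    have hz3 : z ((3 : ℕ) : ZMod s) = z0 := by rw [← SL13.1, ← hz01]
    have hz4 : z ((4 : ℕ) : ZMod s) = z0 := hz04.symm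
    have hlo3 : ∀ k, k ≠ z0 → lo ((3 : ℕ) : ZMod s) k = lo ((0 : ℕ) : ZMod s) k := by
      intro k hk
      rw [← SL13.2 k (by rw [← hz01]; exact hk), ← hlo01 k hk]
    have hlo4 : ∀ k, k ≠ z0 → lo ((4 : ℕ) : ZMod s) k = lo ((0 : ℕ) : ZMod s) k :=
      fun k hk => (hlo04 k hk).symm
    have hlo1 : ∀ k, k ≠ z0 → lo ((1 : ℕ) : ZMod s) k = lo ((0 : ℕ) : ZMod s) k :=
      fun k hk => (hlo01 k hk).symm
    have hlo0 : ∀ k, k ≠ z0 → lo ((0 : ℕ) : ZMod s) k = lo ((0 : ℕ) : ZMod s) k :=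
      fun _ _ => rfl
    -- constructing common points on the shared line
    have mkCommon : ∀ u v : ZMod s, z u = z0 → z v = z0 →
        (∀ k, k ≠ z0 → lo u k = lo ((0 : ℕ) : ZMod s) k) →
        (∀ k, k ≠ z0 → lo v k = lo ((0 : ℕ) : ZMod s) k) →
        ∀ t0 : ℝ, lo u z0 ≤ t0 → t0 ≤ hi u z0 → lo v z0 ≤ t0 → t0 ≤ hi v z0 →
        ∃ x, x ∈ B u ∧ x ∈ B v := by
      intro u v hzu hzv hlu hlv t0 h1 h2 h3 h4
      refine ⟨fun k => if k = z0 then t0 else lo ((0 : ℕ) : ZMod s) k, ?_, ?_⟩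
      · rw [hmem]
        intro k
        by_cases hk : k = z0
        · subst hk; simp only [if_pos rfl]; exact ⟨h1, h2⟩
        · simp only [if_neg hk]
          refine ⟨le_of_eq (hlu k hk), ?_⟩
          rw [← hlu k hk]; exact hle u k
      · rw [hmem]
        intro k
        by_cases hk : k = z0
        · subst hk; simp only [if_pos rfl]; exact ⟨h3, h4⟩
        · simp only [if_neg hk]
          refine ⟨le_of_eq (hlv k hk), ?_⟩
          rw [← hlv k hk]; exact hle v k
    obtain ⟨p04, hp04a, hp04b⟩ := hintV 0 4 (by omega) (by omega)
    obtain ⟨p13, hp13a, hp13b⟩ := hintV 1 3 (by omega) (by omega)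
    obtain ⟨p14, hp14a, hp14b⟩ := hintV 1 4 (by omega) (by omega)
    -- interval bounds at coordinate z0
    have b03a := (hmem _ p).1 hp0 z0
    have b03b := (hmem _ p).1 hp3 z0
    have b04a := (hmem _ p04).1 hp04a z0
    have b04b := (hmem _ p04).1 hp04b z0
    have b13a := (hmem _ p13).1 hp13a z0
    have b13b := (hmem _ p13).1 hp13b z0
    have b14a := (hmem _ p14).1 hp14a z0
    have b14b := (hmem _ p14).1 hp14b z0
    -- segments 0 and 1 are disjoint intervals on the line
    have h01 : hi ((0 : ℕ) : ZMod s) z0 < lo ((1 : ℕ) : ZMod s) z0 ∨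
        hi ((1 : ℕ) : ZMod s) z0 < lo ((0 : ℕ) : ZMod s) z0 := by
      by_contra hcon
      push_neg at hcon
      obtain ⟨x, hx0, hx1⟩ := mkCommon ((0 : ℕ) : ZMod s) ((1 : ℕ) : ZMod s) rfl hz01.symm
        hlo0 hlo1 (max (lo ((0 : ℕ) : ZMod s) z0) (lo ((1 : ℕ) : ZMod s) z0))
        (le_max_left _ _) (max_le (hle _ _) hcon.1) (le_max_right _ _)
        (max_le hcon.2 (hle _ _))
      exact hdisj 0 x hx0 hx1
    rcases h01 with h | h
    · obtain ⟨x, hx3, hx4⟩ := mkCommon ((3 : ℕ) : ZMod s) ((4 : ℕ) : ZMod s) hz3 hz4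
        hlo3 hlo4 (lo ((1 : ℕ) : ZMod s) z0)
        (by linarith [b03a.2, b03b.1]) (by linarith [b13a.1, b13b.2])
        (by linarith [b04a.2, b04b.1]) (by linarith [b14a.1, b14b.2])
      exact hdisj 3 x hx3 hx4
    · obtain ⟨x, hx3, hx4⟩ := mkCommon ((3 : ℕ) : ZMod s) ((4 : ℕ) : ZMod s) hz3 hz4
        hlo3 hlo4 (lo ((0 : ℕ) : ZMod s) z0)
        (by linarith [b13a.2, b13b.1]) (by linarith [b03a.1, b03b.2])
        (by linarith [b14a.2, b14b.1]) (by linarith [b04a.1, b04b.2])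
      exact hdisj 3 x hx3 hx4
  · -- lines of 0 and 1 differ
    obtain ⟨q, hq1, hq4⟩ := hintV 1 4 (by omega) (by omega)
    by_cases hz01 : z ((0 : ℕ) : ZMod s) = z ((1 : ℕ) : ZMod s)
    · push_neg at hSL
      obtain ⟨k, hk, hne⟩ := hSL hz01
      apply hne
      have e1 : p k = lo ((0 : ℕ) : ZMod s) k := hfixpt _ p hp0 k hk
      have e2 : p k = lo ((3 : ℕ) : ZMod s) k :=
        hfixpt _ p hp3 k (by rw [← SL13.1, ← hz01]; exact hk)
      have e3 : lo ((1 : ℕ) : ZMod s) k = lo ((3 : ℕ) : ZMod s) k :=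
        SL13.2 k (by rw [← hz01]; exact hk)
      rw [← e1, e2]
      exact e3.symm
    · have hpq : p = q := by
        funext k
        by_cases hk : k = z ((0 : ℕ) : ZMod s)
        · have h1 : p k = lo ((3 : ℕ) : ZMod s) k :=
            hfixpt _ p hp3 k (by rw [← SL13.1, hk]; exact hz01)
          have h2 : q k = lo ((1 : ℕ) : ZMod s) k :=
            hfixpt _ q hq1 k (by rw [hk]; exact hz01)
          have h3 : lo ((1 : ℕ) : ZMod s) k = lo ((3 : ℕ) : ZMod s) k :=
            SL13.2 k (by rw [hk]; exact hz01)
          rw [h1, h2, h3]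
        · have h1 : p k = lo ((0 : ℕ) : ZMod s) k := hfixpt _ p hp0 k hk
          have h2 : q k = lo ((4 : ℕ) : ZMod s) k :=
            hfixpt _ q hq4 k (by rw [← hz04]; exact hk)
          have h3 : lo ((0 : ℕ) : ZMod s) k = lo ((4 : ℕ) : ZMod s) k := hlo04 k hk
          rw [h1, h2, h3]
      exact hdisj 0 p hp0 (by rw [hpq]; exact hq1)
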